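/- arXiv:1603.06727 — 6 statements merged into one kernel-verified Lean document; each statement's English description precedes it below -/
import Mathlib

section
/- Define ψ_{τ,δ}(θ) = (1-δ)^{2τ}/(1 + δ² - 2δ cos θ)^τ for δ ∈ (0,1), τ > 0, θ ∈ [0,π]. Then the descente operator satisfies D_S ψ_{τ,δ} = ψ_{τ+1,δ}, i.e., ψ'_{τ,δ}(θ)/(sin θ · ψ''_{τ,δ}(0)) = ψ_{τ+1,δ}(θ) for θ ∈ (0,π). -/
open Real

theorem stmt_9 (τ δ : ℝ) (hτ : 0 < τ) (hδ : δ ∈ Set.Ioo (0 : ℝ) 1)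
    (ψ : ℝ → ℝ → ℝ)
    (hψ : ∀ σ θ, ψ σ θ = (1 - δ) ^ (2 * σ) / (1 + δ ^ 2 - 2 * δ * Real.cos θ) ^ σ) :
    ∀ θ ∈ Set.Ioo (0 : ℝ) π,
      deriv (ψ τ) θ / (Real.sin θ * deriv (deriv (ψ τ)) 0) = ψ (τ + 1) θ := by
  obtain ⟨hδ0, hδ1⟩ := hδ
  set f : ℝ → ℝ := fun θ => 1 + δ ^ 2 - 2 * δ * Real.cos θ with hfdef
  have hfpos : ∀ θ, 0 < f θ := by
    intro θ
    have h1 := Real.cos_le_one θ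
    simp only [hfdef]
    nlinarith
  have h1δ : (0:ℝ) < 1 - δ := by linarith
  set C : ℝ := (1 - δ) ^ (2 * τ) with hCdef
  have hCpos : 0 < C := Real.rpow_pos_of_pos h1δ _
  have hψeq : ψ τ = fun θ => C * f θ ^ (-τ) := by
    funext θ
    rw [hψ, Real.rpow_neg (hfpos θ).le, div_eq_mul_inv]
  have hfder : ∀ θ : ℝ, HasDerivAt f (2 * δ * Real.sin θ) θ := by
    intro θ
    have h := ((Real.hasDerivAt_cos θ).const_mul (2 * δ)).const_sub (1 + δ ^ 2)
    refine h.congr_deriv ?_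
    ring
  have hder : ∀ θ : ℝ, HasDerivAt (ψ τ)
      (C * (-τ) * (2 * δ) * (f θ ^ (-τ - 1) * Real.sin θ)) θ := by
    intro θ
    rw [hψeq]
    have h2 := (hfder θ).rpow_const (p := -τ) (Or.inl (hfpos θ).ne')
    have h3 := h2.const_mul C
    refine h3.congr_deriv ?_
    ring
  have hderivψ : deriv (ψ τ) = fun θ => C * (-τ) * (2 * δ) * (f θ ^ (-τ - 1) * Real.sin θ) := by
    funext θ
    exact (hder θ).deriv
  -- second derivative at 0
  have hder2 : HasDerivAt (fun θ => f θ ^ (-τ - 1) * Real.sin θ)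
      (((1 - δ) ^ 2) ^ (-τ - 1 : ℝ)) 0 := by
    have h2 := (hfder 0).rpow_const (p := -τ - 1) (Or.inl (hfpos 0).ne')
    have h3 := h2.mul (Real.hasDerivAt_sin 0)
    have hf0 : f 0 = (1 - δ) ^ 2 := by simp [hfdef]; ring
    refine h3.congr_deriv ?_
    simp [hf0]
  have hd2 : deriv (deriv (ψ τ)) 0 = C * (-τ) * (2 * δ) * (((1 - δ) ^ 2) ^ (-τ - 1 : ℝ)) := by
    rw [hderivψ]
    exact (hder2.const_mul (C * (-τ) * (2 * δ))).deriv
  intro θ hθ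
  obtain ⟨hθ0, hθπ⟩ := hθ
  have hs : 0 < Real.sin θ := Real.sin_pos_of_pos_of_lt_pi hθ0 hθπ
  rw [(hder θ).deriv, hd2, hψ]
  have hA : f θ ^ (-τ - 1) * f θ ^ (τ + 1) = 1 := by
    rw [← Real.rpow_add (hfpos θ)]
    norm_num
  have hK : (((1 - δ) ^ 2) ^ (-τ - 1 : ℝ)) * (1 - δ) ^ (2 * (τ + 1)) = 1 := by
    rw [Real.rpow_mul h1δ.le, Real.rpow_two, ← Real.rpow_add (by positivity)]
    norm_num
  have hfθ : (0:ℝ) < f θ ^ (τ + 1) := Real.rpow_pos_of_pos (hfpos θ) _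
  have hKpos : (0:ℝ) < ((1 - δ) ^ 2) ^ (-τ - 1 : ℝ) := Real.rpow_pos_of_pos (by positivity) _
  have hne : Real.sin θ * (C * -τ * (2 * δ) * (((1 - δ) ^ 2) ^ (-τ - 1 : ℝ))) ≠ 0 := by
    apply mul_ne_zero hs.ne'
    apply mul_ne_zero (mul_ne_zero (mul_ne_zero hCpos.ne' (neg_ne_zero.mpr hτ.ne')) (by positivity)) hKpos.ne'
  rw [show (1 + δ ^ 2 - 2 * δ * Real.cos θ) = f θ from rfl]
  rw [div_eq_div_iff hne hfθ.ne']
  linear_combination (C * -τ * (2 * δ) * Real.sin θ) * hA - (C * -τ * (2 * δ) * Real.sin θ) * hK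
end

section
/- Let (b_n)_{n≥0} be nonnegative reals with ∑ b_n = 1, let ψ(θ) = ∑ b_n (cos θ)^n on [0,π], and suppose ∑_{n=0}^∞ (-1)^n b_n/(n+1) ≥ 0. Then the montée I_S ψ(θ) = ∫_θ^π sin β ψ(β) dβ / ∫_0^π sin β ψ(β) dβ admits the representation I_S ψ(θ) = ∑_{n=0}^∞ a_n (cos θ)^n with a_n ≥ 0, ∑ a_n = 1, where a_n = b_{n-1}/(n·G) for n ≥ 1 and a_0 = (1/G)·∑_{n=0}^∞ (-1)^n b_n/(n+1), with G = 2·∑_{n=0}^∞ b_{2n}/(2n+1). -/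
open Real MeasureTheory

private lemma int_sin_cos_pow (n : ℕ) (θ : ℝ) :
    ∫ β in θ..π, Real.sin β * Real.cos β ^ n
      = ((Real.cos θ) ^ (n + 1) + (-1) ^ n) / ((n : ℝ) + 1) := by
  have hne : ((n : ℝ) + 1) ≠ 0 := by positivity
  have h : ∀ x ∈ Set.uIcc θ π,
      HasDerivAt (fun y => -(Real.cos y ^ (n + 1)) / ((n : ℝ) + 1))
        (Real.sin x * Real.cos x ^ n) x := by
    intro x _
    have h1 : HasDerivAt Real.cos (-Real.sin x) x := Real.hasDerivAt_cos x
    have h2 := (h1.pow (n + 1)).neg.div_const ((n : ℝ) + 1)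
    refine h2.congr_deriv ?_
    simp only [Nat.add_sub_cancel]
    push_cast
    field_simp
  rw [intervalIntegral.integral_eq_sub_of_hasDerivAt h
    ((Real.continuous_sin.mul (Real.continuous_cos.pow n)).intervalIntegrable _ _)]
  rw [Real.cos_pi]
  rw [show (-1 : ℝ) ^ (n + 1) = -(-1) ^ n by ring]
  field_simp
  ring

theorem stmt_12 (b : ℕ → ℝ) (hb : ∀ n, 0 ≤ b n) (hsum : HasSum b 1)
    (ψ : ℝ → ℝ) (hψ : ∀ θ, ψ θ = ∑' n : ℕ, b n * (Real.cos θ) ^ n)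
    (hc : 0 ≤ ∑' n : ℕ, (-1 : ℝ) ^ n * b n / ((n : ℝ) + 1))
    (G : ℝ) (hG : G = 2 * ∑' n : ℕ, b (2 * n) / (2 * (n : ℝ) + 1))
    (a : ℕ → ℝ)
    (ha0 : a 0 = (∑' n : ℕ, (-1 : ℝ) ^ n * b n / ((n : ℝ) + 1)) / G)
    (han : ∀ n : ℕ, 1 ≤ n → a n = b (n - 1) / ((n : ℝ) * G)) :
    (∀ n, 0 ≤ a n) ∧ HasSum a 1 ∧
      ∀ θ ∈ Set.Icc (0 : ℝ) π,
        (∫ β in θ..π, Real.sin β * ψ β) / (∫ β in (0 : ℝ)..π, Real.sin β * ψ β) =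
          ∑' n : ℕ, a n * (Real.cos θ) ^ n := by
  have Sb : Summable b := hsum.summable
  set C : ℝ := ∑' n : ℕ, (-1 : ℝ) ^ n * b n / ((n : ℝ) + 1) with hCdef
  -- summability of the alternating series
  have SC : Summable (fun n : ℕ => (-1 : ℝ) ^ n * b n / ((n : ℝ) + 1)) := by
    apply Sb.of_norm_bounded
    intro n
    have h1 : (1 : ℝ) ≤ (n : ℝ) + 1 := by
      have := Nat.cast_nonneg (α := ℝ) n; linarith
    rw [norm_div, norm_mul, norm_pow, norm_neg, norm_one, one_pow, one_mul,
      Real.norm_of_nonneg (hb n), Real.norm_of_nonneg (by positivity)]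
    exact div_le_self (hb n) h1
  have hCsum : HasSum (fun n : ℕ => (-1 : ℝ) ^ n * b n / ((n : ℝ) + 1)) C := SC.hasSum
  -- summability of the power-series part
  have Sx : ∀ x : ℝ, |x| ≤ 1 →
      Summable (fun n : ℕ => b n * (x ^ (n + 1) / ((n : ℝ) + 1))) := by
    intro x hx
    apply Sb.of_norm_bounded
    intro n
    have h1 : (1 : ℝ) ≤ (n : ℝ) + 1 := by
      have := Nat.cast_nonneg (α := ℝ) n; linarith
    have hxp : |x ^ (n + 1)| ≤ 1 := by
      rw [abs_pow]; exact pow_le_one₀ (abs_nonneg x) hx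
    rw [norm_mul, norm_div, Real.norm_of_nonneg (hb n),
      Real.norm_of_nonneg (show (0:ℝ) ≤ (n:ℝ)+1 by positivity), Real.norm_eq_abs]
    have hd : |x ^ (n + 1)| / ((n : ℝ) + 1) ≤ 1 := by
      rw [div_le_one (show (0:ℝ) < (n:ℝ)+1 by positivity)]
      exact hxp.trans h1
    calc b n * (|x ^ (n + 1)| / ((n : ℝ) + 1)) ≤ b n * 1 :=
          mul_le_mul_of_nonneg_left hd (hb n)
        _ = b n := mul_one _
  -- the key series identity at a point x
  have key : ∀ x : ℝ, |x| ≤ 1 →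
      HasSum (fun n : ℕ => b n * ((x ^ (n + 1) + (-1) ^ n) / ((n : ℝ) + 1)))
        (C + ∑' n : ℕ, b n * (x ^ (n + 1) / ((n : ℝ) + 1))) := by
    intro x hx
    have h := hCsum.add (Sx x hx).hasSum
    refine h.congr_fun fun n => ?_
    have hne : ((n : ℝ) + 1) ≠ 0 := by positivity
    field_simp
    ring
  -- value of the sum at x = 1 is G
  have S2 : Summable (fun k : ℕ => b (2 * k) / (2 * (k : ℝ) + 1)) := by
    have hinj : Function.Injective (fun k : ℕ => 2 * k) := fun p q h => by dsimp at h; omega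
    have Sb2 : Summable (fun k : ℕ => b (2 * k)) := Sb.comp_injective hinj
    apply Sb2.of_norm_bounded
    intro k
    have h1 : (1 : ℝ) ≤ 2 * (k : ℝ) + 1 := by
      have := Nat.cast_nonneg (α := ℝ) k; linarith
    rw [norm_div, Real.norm_of_nonneg (hb _), Real.norm_of_nonneg (by linarith)]
    exact div_le_self (hb _) h1
  have hG1 : C + (∑' n : ℕ, b n * ((1:ℝ) ^ (n + 1) / ((n : ℝ) + 1))) = G := by
    have hk1 := key 1 (by norm_num)
    set f : ℕ → ℝ := fun n => b n * (((1:ℝ) ^ (n + 1) + (-1) ^ n) / ((n : ℝ) + 1)) with hf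
    have hinj : Function.Injective (fun k : ℕ => 2 * k) := fun p q h => by dsimp at h; omega
    have hnil : ∀ m ∉ Set.range (fun k : ℕ => 2 * k), f m = 0 := by
      intro m hm
      have hodd : Odd m := by
        rcases Nat.even_or_odd m with he | ho
        · obtain ⟨r, hr⟩ := he
          exact absurd ⟨r, by dsimp; omega⟩ hm
        · exact ho
      simp only [hf, hodd.neg_one_pow, one_pow]
      ring
    have hcomp : (f ∘ fun k : ℕ => 2 * k) = fun k : ℕ => 2 * (b (2 * k) / (2 * (k : ℝ) + 1)) := by
      funext k
      simp only [Function.comp, hf, one_pow, Even.neg_one_pow (even_two_mul k)]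
      push_cast
      have hne : (2 * (k : ℝ) + 1) ≠ 0 := by positivity
      field_simp
      ring
    have hfs : HasSum f G := by
      rw [← (Function.Injective.hasSum_iff hinj hnil), hcomp, hG]
      exact (S2.hasSum).mul_left 2
    exact hk1.unique hfs
  -- G is positive
  have hT1pos : 0 < ∑' n : ℕ, b n * ((1:ℝ) ^ (n + 1) / ((n : ℝ) + 1)) := by
    obtain ⟨m, hm⟩ : ∃ m, 0 < b m := by
      by_contra h
      push_neg at h
      have hz : ∀ n, b n = 0 := fun n => le_antisymm (h n) (hb n)
      have : HasSum b 0 := by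
        have : b = fun _ => (0:ℝ) := funext hz
        rw [this]; exact hasSum_zero
      exact one_ne_zero (hsum.unique this)
    have hle : b m * ((1:ℝ) ^ (m + 1) / ((m : ℝ) + 1)) ≤
        ∑' n : ℕ, b n * ((1:ℝ) ^ (n + 1) / ((n : ℝ) + 1)) := by
      apply Summable.le_tsum (Sx 1 (by norm_num)) m
      intro j _
      exact mul_nonneg (hb j) (by positivity)
    have : 0 < b m * ((1:ℝ) ^ (m + 1) / ((m : ℝ) + 1)) := by
      apply mul_pos hm
      positivity
    linarith
  have hGpos : 0 < G := by rw [← hG1]; linarith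
  have hGne : G ≠ 0 := ne_of_gt hGpos
  -- nonnegativity of a
  have hapos : ∀ n, 0 ≤ a n := by
    intro n
    cases n with
    | zero => rw [ha0]; exact div_nonneg hc hGpos.le
    | succ m =>
      rw [han (m + 1) (by omega)]
      simp only [Nat.add_sub_cancel]
      apply div_nonneg (hb m)
      have : (0:ℝ) ≤ (m:ℝ) + 1 := by positivity
      push_cast
      nlinarith
  -- the full power-series representation of a
  have hax : ∀ x : ℝ, |x| ≤ 1 →
      HasSum (fun n : ℕ => a n * x ^ n)
        ((C + ∑' n : ℕ, b n * (x ^ (n + 1) / ((n : ℝ) + 1))) / G) := by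
    intro x hx
    have h1 : HasSum (fun n : ℕ => a (n + 1) * x ^ (n + 1))
        ((∑' n : ℕ, b n * (x ^ (n + 1) / ((n : ℝ) + 1))) / G) := by
      have h2 := (Sx x hx).hasSum.div_const G
      refine h2.congr_fun fun n => ?_
      rw [han (n + 1) (by omega)]
      simp only [Nat.add_sub_cancel]
      have hne : ((n : ℝ) + 1) ≠ 0 := by positivity
      push_cast
      field_simp
    have h3 := (hasSum_nat_add_iff (f := fun n : ℕ => a n * x ^ n) 1).mp h1
    simp only [Finset.range_one, Finset.sum_singleton, pow_zero, mul_one] at h3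
    rw [ha0] at h3
    rw [add_div, add_comm]
    exact h3
  -- integral identity
  have hInt : ∀ θ : ℝ, θ ≤ π →
      ∫ β in θ..π, Real.sin β * ψ β
        = C + ∑' n : ℕ, b n * ((Real.cos θ) ^ (n + 1) / ((n : ℝ) + 1)) := by
    intro θ hθ
    set F : ℕ → ℝ → ℝ := fun n β => b n * (Real.sin β * Real.cos β ^ n) with hF
    have hFc : ∀ n, Continuous (F n) := fun n =>
      continuous_const.mul (Real.continuous_sin.mul (Real.continuous_cos.pow n))
    have hFint : ∀ n, Integrable (F n) (volume.restrict (Set.Ioc θ π)) :=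
      fun n => (hFc n).integrableOn_Ioc
    have hbd : ∀ n, ∀ β ∈ Set.Ioc θ π, ‖F n β‖ ≤ b n := by
      intro n β _
      rw [hF]
      dsimp only
      rw [norm_mul, Real.norm_of_nonneg (hb n)]
      have h1 : ‖Real.sin β * Real.cos β ^ n‖ ≤ 1 := by
        rw [norm_mul, norm_pow, Real.norm_eq_abs, Real.norm_eq_abs]
        calc |Real.sin β| * |Real.cos β| ^ n ≤ 1 * 1 ^ n := by
              apply mul_le_mul (Real.abs_sin_le_one β)
                (pow_le_pow_left₀ (abs_nonneg _) (Real.abs_cos_le_one β) n)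
                (by positivity) (by norm_num)
          _ = 1 := by norm_num
      calc b n * ‖Real.sin β * Real.cos β ^ n‖ ≤ b n * 1 :=
            mul_le_mul_of_nonneg_left h1 (hb n)
        _ = b n := mul_one _
    have hnorm : ∀ n, (∫ β in Set.Ioc θ π, ‖F n β‖) ≤ (volume (Set.Ioc θ π)).toReal * b n := by
      intro n
      calc (∫ β in Set.Ioc θ π, ‖F n β‖)
          ≤ ∫ _ in Set.Ioc θ π, b n := by
            apply setIntegral_mono_on ((hFc n).norm.integrableOn_Ioc)
              (integrableOn_const measure_Ioc_lt_top.ne) measurableSet_Ioc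
            exact hbd n
        _ = (volume (Set.Ioc θ π)).toReal * b n := by
            rw [setIntegral_const, smul_eq_mul, measureReal_def]
    have hsumm : Summable fun n => ∫ β in Set.Ioc θ π, ‖F n β‖ :=
      Summable.of_nonneg_of_le (fun n => integral_nonneg fun β => norm_nonneg _)
        hnorm (Sb.mul_left _)
    have hs := MeasureTheory.hasSum_integral_of_summable_integral_norm
      (μ := volume.restrict (Set.Ioc θ π)) hFint hsumm
    have hpt : ∀ β, (∑' n : ℕ, F n β) = Real.sin β * ψ β := by
      intro β
      rw [hψ, ← tsum_mul_left]
      exact tsum_congr fun n => by rw [hF]; ring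
    have h4 : (∫ β in Set.Ioc θ π, ∑' n : ℕ, F n β) = ∫ β in θ..π, Real.sin β * ψ β := by
      rw [← intervalIntegral.integral_of_le hθ]
      simp only [hpt]
    have heq : ∀ n, (∫ β in Set.Ioc θ π, F n β)
        = b n * (((Real.cos θ) ^ (n + 1) + (-1) ^ n) / ((n : ℝ) + 1)) := by
      intro n
      rw [← intervalIntegral.integral_of_le hθ, hF]
      dsimp only
      rw [intervalIntegral.integral_const_mul, int_sin_cos_pow]
    rw [h4] at hs
    have hs2 : HasSum (fun n : ℕ => b n * (((Real.cos θ) ^ (n + 1) + (-1) ^ n) / ((n : ℝ) + 1)))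
        (∫ β in θ..π, Real.sin β * ψ β) :=
      hs.congr_fun fun n => (heq n).symm
    exact hs2.unique (key (Real.cos θ) (Real.abs_cos_le_one θ))
  -- conclusion
  refine ⟨hapos, ?_, ?_⟩
  · have h := hax 1 (by norm_num)
    have hG1' := hG1
    simp only [one_pow, mul_one] at h hG1'
    rw [hG1', div_self hGne] at h
    exact h
  · intro θ hθ
    have h0 : ∫ β in (0:ℝ)..π, Real.sin β * ψ β = G := by
      rw [hInt 0 Real.pi_nonneg]
      simp only [Real.cos_zero]
      exact hG1
    rw [h0, hInt θ hθ.2]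
    exact ((hax (Real.cos θ) (Real.abs_cos_le_one θ)).tsum_eq).symm
end

section
/- Let (b_n)_{n≥0} be nonnegative reals with ∑ b_n = 1, b_n > 0 for some n ≥ 1, G = ∑_{n=0}^∞ b_{n+1}(n+1) < ∞, and ψ(θ) = ∑ b_n (cos θ)^n on [0,π]. Then on (0,π), ψ'(θ)/(sin θ · ψ''(0)) = ∑_{n=0}^∞ c_n (cos θ)^n with c_n = b_{n+1}(n+1)/G, so c_n ≥ 0 and ∑ c_n = 1. -/
open Real

theorem stmt_13 (b : ℕ → ℝ) (hb : ∀ n, 0 ≤ b n) (hsum : HasSum b 1)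
    (hpos : ∃ n : ℕ, 1 ≤ n ∧ 0 < b n)
    (hmom : Summable (fun n : ℕ => b (n + 1) * ((n : ℝ) + 1)))
    (G : ℝ) (hG : G = ∑' n : ℕ, b (n + 1) * ((n : ℝ) + 1))
    (ψ : ℝ → ℝ) (hψ : ∀ θ, ψ θ = ∑' n : ℕ, b n * (Real.cos θ) ^ n)
    (c : ℕ → ℝ) (hc : ∀ n, c n = b (n + 1) * ((n : ℝ) + 1) / G) :
    (∀ θ ∈ Set.Ioo (0 : ℝ) π,
        deriv ψ θ / (Real.sin θ * deriv (deriv ψ) 0) = ∑' n : ℕ, c n * (Real.cos θ) ^ n) ∧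
      (∀ n, 0 ≤ c n) ∧ HasSum c 1 := by
  -- G is positive
  have hG0 : 0 < G := by
    obtain ⟨n, hn1, hnpos⟩ := hpos
    have hle : b ((n - 1) + 1) * (((n - 1 : ℕ) : ℝ) + 1) ≤ G := by
      rw [hG]
      exact Summable.le_tsum hmom (n - 1) (fun k _ => mul_nonneg (hb _) (by positivity))
    have hkey : 0 < b ((n - 1) + 1) * (((n - 1 : ℕ) : ℝ) + 1) := by
      have hn : n - 1 + 1 = n := Nat.succ_pred_eq_of_pos hn1
      rw [hn]
      positivity
    linarith
  -- the moment series has sum G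
  have Hmom : HasSum (fun n : ℕ => b (n + 1) * ((n : ℝ) + 1)) G := hG ▸ hmom.hasSum
  -- the auxiliary function h
  set h : ℝ → ℝ := fun θ => ∑' n : ℕ, b (n + 1) * ((n : ℝ) + 1) * Real.cos θ ^ n with hh
  -- h is continuous
  have hcont : Continuous h := by
    apply continuous_tsum (u := fun n : ℕ => b (n + 1) * ((n : ℝ) + 1))
    · intro n; fun_prop
    · exact hmom
    · intro n x
      have h1 : |Real.cos x| ≤ 1 := Real.abs_cos_le_one x
      have h2 : 0 ≤ b (n + 1) * ((n : ℝ) + 1) := mul_nonneg (hb _) (by positivity)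
      have hp : |Real.cos x| ^ n ≤ 1 := pow_le_one₀ (abs_nonneg _) h1
      calc ‖b (n + 1) * ((n : ℝ) + 1) * Real.cos x ^ n‖
          = (b (n + 1) * ((n : ℝ) + 1)) * |Real.cos x| ^ n := by
            rw [Real.norm_eq_abs, abs_mul, abs_pow, abs_of_nonneg h2]
        _ ≤ (b (n + 1) * ((n : ℝ) + 1)) * 1 := mul_le_mul_of_nonneg_left hp h2
        _ = b (n + 1) * ((n : ℝ) + 1) := mul_one _
  have hval0 : h 0 = G := by
    rw [hh]
    simp only [Real.cos_zero, one_pow, mul_one]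
    exact hG.symm
  -- summable bound for derivatives
  have humom : Summable (fun n : ℕ => b n * (n : ℝ)) := by
    rw [← summable_nat_add_iff 1]
    exact hmom.congr (fun n => by push_cast; ring)
  -- ψ is differentiable with derivative -sin θ * h θ
  have Hψ : ∀ θ : ℝ, HasDerivAt ψ (-Real.sin θ * h θ) θ := by
    intro θ
    have hfun : ψ = fun θ => ∑' n : ℕ, b n * Real.cos θ ^ n := funext hψ
    have key : HasDerivAt (fun θ : ℝ => ∑' n : ℕ, b n * Real.cos θ ^ n)
        (∑' n : ℕ, b n * ((n : ℝ) * Real.cos θ ^ (n - 1) * (-Real.sin θ))) θ := by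
      refine hasDerivAt_tsum (u := fun n : ℕ => b n * (n : ℝ))
        (g := fun n y => b n * Real.cos y ^ n)
        (g' := fun n y => b n * ((n : ℝ) * Real.cos y ^ (n - 1) * (-Real.sin y)))
        (y₀ := (0:ℝ)) humom ?_ ?_ ?_ θ
      · intro n y
        exact ((hasDerivAt_pow n (Real.cos y)).comp y (Real.hasDerivAt_cos y)).const_mul (b n)
      · intro n y
        have h1 : |Real.cos y| ≤ 1 := Real.abs_cos_le_one y
        have h2 : |Real.sin y| ≤ 1 := Real.abs_sin_le_one y
        have hp : |Real.cos y| ^ (n - 1) ≤ 1 := pow_le_one₀ (abs_nonneg _) h1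
        have hps : |Real.cos y| ^ (n - 1) * |Real.sin y| ≤ 1 :=
          mul_le_one₀ hp (abs_nonneg _) h2
        calc ‖b n * ((n : ℝ) * Real.cos y ^ (n - 1) * (-Real.sin y))‖
            = b n * (n : ℝ) * (|Real.cos y| ^ (n - 1) * |Real.sin y|) := by
              rw [Real.norm_eq_abs, abs_mul, abs_mul, abs_mul, abs_neg, abs_pow,
                abs_of_nonneg (hb n), Nat.abs_cast]
              ring
          _ ≤ b n * (n : ℝ) * 1 := mul_le_mul_of_nonneg_left hps (mul_nonneg (hb n) (Nat.cast_nonneg n))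
          _ = b n * (n : ℝ) := mul_one _
      · exact hsum.summable.congr (fun n => by simp : ∀ n, b n = b n * Real.cos 0 ^ n)
    have hsummv : Summable (fun n : ℕ => b n * ((n : ℝ) * Real.cos θ ^ (n - 1))) := by
      apply Summable.of_norm_bounded humom
      intro n
      have h1 : |Real.cos θ| ≤ 1 := Real.abs_cos_le_one θ
      have hp : |Real.cos θ| ^ (n - 1) ≤ 1 := pow_le_one₀ (abs_nonneg _) h1
      calc ‖b n * ((n : ℝ) * Real.cos θ ^ (n - 1))‖
          = b n * (n : ℝ) * |Real.cos θ| ^ (n - 1) := by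
            rw [Real.norm_eq_abs, abs_mul, abs_mul, abs_pow, abs_of_nonneg (hb n),
              Nat.abs_cast]
            ring
        _ ≤ b n * (n : ℝ) * 1 := mul_le_mul_of_nonneg_left hp (mul_nonneg (hb n) (Nat.cast_nonneg n))
        _ = b n * (n : ℝ) := mul_one _
    have heq : (∑' n : ℕ, b n * ((n : ℝ) * Real.cos θ ^ (n - 1) * (-Real.sin θ)))
        = -Real.sin θ * h θ := by
      calc (∑' n : ℕ, b n * ((n : ℝ) * Real.cos θ ^ (n - 1) * (-Real.sin θ)))
          = ∑' n : ℕ, (-Real.sin θ) * (b n * ((n : ℝ) * Real.cos θ ^ (n - 1))) := by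
            congr 1; funext n; ring
        _ = -Real.sin θ * ∑' n : ℕ, b n * ((n : ℝ) * Real.cos θ ^ (n - 1)) := tsum_mul_left
        _ = -Real.sin θ * h θ := by
            congr 1
            rw [Summable.tsum_eq_zero_add hsummv]
            simp only [Nat.cast_zero, zero_mul, mul_zero, zero_add]
            rw [hh]
            congr 1; funext n
            simp only [Nat.add_sub_cancel]
            push_cast
            ring
    rw [hfun, ← heq]
    exact key
  have hderivψ : deriv ψ = fun θ => -Real.sin θ * h θ := funext fun θ => (Hψ θ).deriv
  -- second derivative at 0 is -G
  have Hψ'' : HasDerivAt (deriv ψ) (-G) 0 := by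
    rw [hderivψ, hasDerivAt_iff_tendsto_slope]
    have hslope_sin : (slope Real.sin 0) = fun x : ℝ => Real.sin x / x := by
      funext x; simp [slope_def_field]
    have hsin : Filter.Tendsto (fun x : ℝ => Real.sin x / x) (nhdsWithin 0 {(0:ℝ)}ᶜ)
        (nhds 1) := by
      have hds := Real.hasDerivAt_sin 0
      rw [hasDerivAt_iff_tendsto_slope] at hds
      simpa [hslope_sin] using hds
    have hslope_eq : slope (fun θ => -Real.sin θ * h θ) 0
        = fun x : ℝ => -(Real.sin x / x) * h x := by
      funext x
      simp [slope_def_field]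
      ring
    rw [hslope_eq]
    have hth : Filter.Tendsto (fun x : ℝ => h x) (nhdsWithin 0 {(0:ℝ)}ᶜ) (nhds G) := by
      have := (hcont.tendsto 0).mono_left (nhdsWithin_le_nhds (s := {(0:ℝ)}ᶜ))
      rwa [hval0] at this
    have := (hsin.neg).mul hth
    simpa using this
  have hD2 : deriv (deriv ψ) 0 = -G := Hψ''.deriv
  refine ⟨?_, ?_, ?_⟩
  · intro θ hθ
    have hs : Real.sin θ ≠ 0 := (Real.sin_pos_of_pos_of_lt_pi hθ.1 hθ.2).ne'
    have hrhs : ∑' n : ℕ, c n * Real.cos θ ^ n = h θ / G := by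
      rw [hh]
      rw [← tsum_div_const]
      congr 1; funext n
      rw [hc]
      ring
    rw [hD2, hrhs]
    have : deriv ψ θ = -Real.sin θ * h θ := by rw [hderivψ]
    rw [this]
    field_simp
  · intro n
    rw [hc]
    exact div_nonneg (mul_nonneg (hb _) (by positivity)) hG0.le
  · have h1 := Hmom.div_const G
    rw [div_self hG0.ne'] at h1
    exact (funext hc : c = fun n => b (n + 1) * ((n : ℝ) + 1) / G) ▸ h1
end

section
/- For d ≥ 2, define κ_d(j,n) = [Γ(d-1)/Γ((d-1)/2)²] · Γ((d-1+j-n)/2)·Γ((d-1+j+n)/2)·j! / [Γ((j-n+2)/2)·Γ((j+n+2)/2)·Γ(d-1+j)]. Then for all j, n ≥ 1: κ_{d+2}(2j, 2n) = (d/(d-1)) · [(d-1+2j)/(d+2j) - (2n)²/((d-1+2j)(d+2j))] · κ_d(2j, 2n). -/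
open Real

/-- The coefficients `κ_d(j, n)`, defined for real `d, j, n` via the Gamma function. -/
noncomputable def kappa (d j n : ℝ) : ℝ :=
  (Real.Gamma (d - 1) / (Real.Gamma ((d - 1) / 2)) ^ 2) *
    (Real.Gamma ((d - 1 + j - n) / 2) * Real.Gamma ((d - 1 + j + n) / 2) * Real.Gamma (j + 1)) /
      (Real.Gamma ((j - n + 2) / 2) * Real.Gamma ((j + n + 2) / 2) * Real.Gamma (d - 1 + j))

theorem stmt_14 (d : ℕ) (hd : 2 ≤ d) (j n : ℕ) (hj : 1 ≤ j) (hn : 1 ≤ n) :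
    kappa ((d : ℝ) + 2) (2 * j) (2 * n) =
      ((d : ℝ) / ((d : ℝ) - 1)) *
        (((d : ℝ) - 1 + 2 * j) / ((d : ℝ) + 2 * j) -
          (2 * (n : ℝ)) ^ 2 / (((d : ℝ) - 1 + 2 * j) * ((d : ℝ) + 2 * j))) *
        kappa (d : ℝ) (2 * j) (2 * n) := by
  have hd2 : (2:ℝ) ≤ (d:ℝ) := by exact_mod_cast hd
  rcases le_or_gt n j with h | h
  · -- nondegenerate case: n ≤ j
    have hnj : (n:ℝ) ≤ (j:ℝ) := by exact_mod_cast h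
    have hj1 : (1:ℝ) ≤ (j:ℝ) := by exact_mod_cast hj
    have hn1 : (1:ℝ) ≤ (n:ℝ) := by exact_mod_cast hn
    have hd1 : (0:ℝ) < (d:ℝ) - 1 := by linarith
    have hs : (0:ℝ) < ((d:ℝ) - 1 + 2*j - 2*n)/2 := by linarith
    have ht : (0:ℝ) < ((d:ℝ) - 1 + 2*j + 2*n)/2 := by linarith
    have g1 : Real.Gamma ((d:ℝ) + 2 - 1) = (d:ℝ) * ((d:ℝ)-1) * Real.Gamma ((d:ℝ)-1) := by
      have e : (d:ℝ) + 2 - 1 = ((d:ℝ)-1) + 1 + 1 := by ring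
      rw [e, Real.Gamma_add_one (by linarith), Real.Gamma_add_one (by linarith)]
      ring
    have g2 : Real.Gamma (((d:ℝ) + 2 - 1)/2) = (((d:ℝ)-1)/2) * Real.Gamma (((d:ℝ)-1)/2) := by
      have e : ((d:ℝ) + 2 - 1)/2 = ((d:ℝ)-1)/2 + 1 := by ring
      rw [e, Real.Gamma_add_one (by linarith)]
    have g3 : Real.Gamma (((d:ℝ) + 2 - 1 + 2*j - 2*n)/2)
        = (((d:ℝ) - 1 + 2*j - 2*n)/2) * Real.Gamma (((d:ℝ) - 1 + 2*j - 2*n)/2) := by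
      have e : ((d:ℝ) + 2 - 1 + 2*j - 2*n)/2 = ((d:ℝ) - 1 + 2*j - 2*n)/2 + 1 := by ring
      rw [e, Real.Gamma_add_one hs.ne']
    have g4 : Real.Gamma (((d:ℝ) + 2 - 1 + 2*j + 2*n)/2)
        = (((d:ℝ) - 1 + 2*j + 2*n)/2) * Real.Gamma (((d:ℝ) - 1 + 2*j + 2*n)/2) := by
      have e : ((d:ℝ) + 2 - 1 + 2*j + 2*n)/2 = ((d:ℝ) - 1 + 2*j + 2*n)/2 + 1 := by ring
      rw [e, Real.Gamma_add_one ht.ne']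
    have g5 : Real.Gamma ((d:ℝ) + 2 - 1 + 2*j)
        = ((d:ℝ) + 2*j) * (((d:ℝ) - 1 + 2*j)) * Real.Gamma ((d:ℝ) - 1 + 2*j) := by
      have e : (d:ℝ) + 2 - 1 + 2*j = ((d:ℝ) - 1 + 2*j) + 1 + 1 := by ring
      rw [e, Real.Gamma_add_one (by linarith), Real.Gamma_add_one (by linarith)]
      ring
    have p1 : Real.Gamma (((d:ℝ)-1)/2) ≠ 0 := (Real.Gamma_pos_of_pos (by linarith)).ne'
    have p2 : Real.Gamma ((2*(j:ℝ) - 2*n + 2)/2) ≠ 0 :=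
      (Real.Gamma_pos_of_pos (by linarith)).ne'
    have p3 : Real.Gamma ((2*(j:ℝ) + 2*n + 2)/2) ≠ 0 :=
      (Real.Gamma_pos_of_pos (by linarith)).ne'
    have p4 : Real.Gamma ((d:ℝ) - 1 + 2*j) ≠ 0 :=
      (Real.Gamma_pos_of_pos (by linarith)).ne'
    have q1 : (d:ℝ) - 1 ≠ 0 := hd1.ne'
    have q2 : (d:ℝ) + 2*j ≠ 0 := by positivity
    have q3 : (d:ℝ) - 1 + 2*j ≠ 0 := by nlinarith
    simp only [kappa, g1, g2, g3, g4, g5]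
    field_simp
    ring
  · -- degenerate case: n > j, both sides vanish
    have hle : j + 1 ≤ n := h
    have hc : ((n - (j+1) : ℕ) : ℝ) = (n:ℝ) - (j+1) := by
      push_cast [Nat.cast_sub hle]; ring
    have hz : Real.Gamma ((2*(j:ℝ) - 2*n + 2)/2) = 0 := by
      have e : (2*(j:ℝ) - 2*n + 2)/2 = -((n - (j+1) : ℕ) : ℝ) := by
        rw [hc]; ring
      rw [e, Real.Gamma_neg_nat_eq_zero]
    simp only [kappa, hz, zero_mul, mul_zero, div_zero, mul_zero]
end

section
/- For every integer ℓ ≥ 0, lim_{j→∞} (1/j) ∑_{n=1}^{j-1} f(n/j) = ∫_0^1 f(x) dx = (√π/2) · Γ((ℓ+1)/2)/Γ(ℓ/2 + 1), where f(x) = x^ℓ/√(1-x²). -/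
open Real Filter MeasureTheory Set intervalIntegral

noncomputable def gg (ℓ : ℕ) : ℝ → ℝ :=
  fun u => u ^ (((ℓ:ℝ)+1)/2 - 1) * (1-u) ^ (-(1/2) : ℝ)

lemma gg_eq (ℓ : ℕ) : ∀ x ∈ Icc (0:ℝ) 1,
    ((gg ℓ x : ℝ) : ℂ) = (x:ℂ) ^ ((((ℓ:ℂ)+1)/2) - 1) * ((1:ℂ)-x) ^ ((1/2 : ℂ) - 1) := by
  intro x hx
  have h1 : ((((ℓ:ℂ)+1)/2) - 1) = (((((ℓ:ℝ)+1)/2 - 1) : ℝ) : ℂ) := by push_cast; ring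
  have h2 : ((1/2 : ℂ) - 1) = (((-(1/2):ℝ)) : ℂ) := by push_cast; ring
  rw [h1, h2, show ((1:ℂ)-x) = (((1-x : ℝ)):ℂ) by push_cast; ring,
    ← Complex.ofReal_cpow hx.1, ← Complex.ofReal_cpow (by linarith [hx.2] : (0:ℝ) ≤ 1 - x)]
  push_cast [gg]
  rfl

lemma hu_re (ℓ : ℕ) : 0 < (((ℓ:ℂ)+1)/2).re := by
  simp [Complex.div_re]
  positivity

lemma gg_intervalIntegrable (ℓ : ℕ) : IntervalIntegrable (gg ℓ) volume 0 1 := by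
  have hconv := Complex.betaIntegral_convergent (u := ((ℓ:ℂ)+1)/2) (v := 1/2)
    (hu_re ℓ) (by norm_num)
  have h2 : IntervalIntegrable (fun x : ℝ => ((gg ℓ x : ℝ) : ℂ)) volume 0 1 := by
    refine hconv.congr ?_
    intro x hx
    rw [uIoc_of_le (by norm_num : (0:ℝ) ≤ 1)] at hx
    exact (gg_eq ℓ x ⟨hx.1.le, hx.2⟩).symm
  have h3 : IntervalIntegrable (fun x => ((gg ℓ x : ℝ) : ℂ).re) volume 0 1 := by
    rw [intervalIntegrable_iff] at h2 ⊢
    exact h2.re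
  simpa using h3

lemma gg_integral (ℓ : ℕ) :
    ∫ u in (0:ℝ)..1, gg ℓ u
      = √π * Real.Gamma (((ℓ:ℝ)+1)/2) / Real.Gamma ((ℓ:ℝ)/2+1) := by
  have hbeta : Complex.betaIntegral (((ℓ:ℂ)+1)/2) (1/2)
      = ((∫ u in (0:ℝ)..1, gg ℓ u : ℝ) : ℂ) := by
    rw [Complex.betaIntegral, ← intervalIntegral.integral_ofReal]
    refine intervalIntegral.integral_congr fun x hx => ?_
    rw [uIcc_of_le (by norm_num : (0:ℝ) ≤ 1)] at hx
    exact (gg_eq ℓ x hx).symm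
  have hGne : Complex.Gamma (((ℓ:ℂ)+1)/2 + 1/2) ≠ 0 := by
    have : (((ℓ:ℂ)+1)/2 + 1/2) = (((ℓ:ℝ)/2 + 1 : ℝ) : ℂ) := by push_cast; ring
    rw [this, Complex.Gamma_ofReal]
    exact_mod_cast (Real.Gamma_pos_of_pos (by positivity)).ne'
  have hmul := Complex.Gamma_mul_Gamma_eq_betaIntegral (s := ((ℓ:ℂ)+1)/2) (t := 1/2)
    (hu_re ℓ) (by norm_num)
  have key : ((∫ u in (0:ℝ)..1, gg ℓ u : ℝ) : ℂ)
      = ((√π * Real.Gamma (((ℓ:ℝ)+1)/2) / Real.Gamma ((ℓ:ℝ)/2+1) : ℝ) : ℂ) := by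
    rw [← hbeta]
    have hb : Complex.betaIntegral (((ℓ:ℂ)+1)/2) (1/2)
        = Complex.Gamma (((ℓ:ℂ)+1)/2) * Complex.Gamma (1/2)
          / Complex.Gamma (((ℓ:ℂ)+1)/2 + 1/2) := by
      rw [eq_div_iff hGne, hmul]; ring
    rw [hb]
    have e1 : (((ℓ:ℂ)+1)/2) = ((((ℓ:ℝ)+1)/2 : ℝ) : ℂ) := by push_cast; ring
    have e2 : (((ℓ:ℂ)+1)/2 + 1/2) = (((ℓ:ℝ)/2 + 1 : ℝ) : ℂ) := by push_cast; ring
    have e3 : ((1:ℂ)/2) = (((1:ℝ)/2 : ℝ) : ℂ) := by push_cast; ring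
    rw [e2, e1, e3, Complex.Gamma_ofReal, Complex.Gamma_ofReal, Complex.Gamma_ofReal,
      Real.Gamma_one_half_eq]
    push_cast
    ring
  exact_mod_cast key

lemma key_eq (ℓ : ℕ) {x : ℝ} (hx : x ∈ Ioo (0:ℝ) 1) :
    (2*x) • gg ℓ (x^2) = 2 * (x ^ ℓ / √(1 - x^2)) := by
  obtain ⟨h0, h1⟩ := hx
  have hx2 : (0:ℝ) < 1 - x^2 := by nlinarith
  have e1 : (x^2 : ℝ) ^ (((ℓ:ℝ)+1)/2 - 1) = x ^ ((ℓ:ℝ) - 1) := by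
    rw [← Real.rpow_natCast x 2, ← Real.rpow_mul h0.le]
    norm_num
    ring_nf
  have e2 : ((1 - x^2 : ℝ)) ^ (-(1/2) : ℝ) = 1 / √(1 - x^2) := by
    rw [Real.rpow_neg hx2.le, Real.sqrt_eq_rpow]
    norm_num
  rw [gg]
  simp only [smul_eq_mul]
  rw [e1, e2]
  have e3 : 2 * x * (x ^ ((ℓ:ℝ)-1) * (1/√(1-x^2))) = 2 * ((x * x ^ ((ℓ:ℝ)-1)) / √(1-x^2)) := by
    ring
  rw [e3]
  have e4 : x * x ^ ((ℓ:ℝ)-1) = x ^ (ℓ:ℝ) := by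
    have h := (Real.rpow_add h0 1 ((ℓ:ℝ)-1)).symm
    rw [Real.rpow_one] at h
    rw [h]
    norm_num
  rw [e4, Real.rpow_natCast]

lemma sq_image_Ioo : (fun x : ℝ => x^2) '' Ioo 0 1 = Ioo 0 1 := by
  ext y
  simp only [mem_image, mem_Ioo]
  constructor
  · rintro ⟨x, ⟨hx0, hx1⟩, rfl⟩
    exact ⟨by positivity, by nlinarith⟩
  · rintro ⟨h0, h1⟩
    refine ⟨√y, ⟨Real.sqrt_pos.2 h0, ?_⟩, Real.sq_sqrt h0.le⟩
    have : √y < √1 := Real.sqrt_lt_sqrt h0.le h1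
    simpa using this

lemma smul_integrableOn (ℓ : ℕ) :
    IntegrableOn (fun x : ℝ => (2*x) • gg ℓ (x^2)) (Icc 0 1) volume := by
  have hgI : IntegrableOn (gg ℓ) (Icc 0 1) volume := by
    have := gg_intervalIntegrable ℓ
    rwa [intervalIntegrable_iff_integrableOn_Icc_of_le (by norm_num)] at this
  have hderiv : ∀ x ∈ Ioo (0:ℝ) 1, HasDerivWithinAt (fun x : ℝ => x^2) (2*x) (Ioo 0 1) x := by
    intro x _
    simpa using (hasDerivAt_pow 2 x).hasDerivWithinAt
  have hinj : InjOn (fun x : ℝ => x^2) (Ioo 0 1) := by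
    intro a ha b hb h
    simp only at h
    nlinarith [ha.1, hb.1]
  have habs := (integrableOn_image_iff_integrableOn_abs_deriv_smul measurableSet_Ioo
    hderiv hinj (gg ℓ)).mp (by rw [sq_image_Ioo]; exact hgI.mono_set Ioo_subset_Icc_self)
  rw [integrableOn_Icc_iff_integrableOn_Ioo]
  refine habs.congr_fun (fun x hx => ?_) measurableSet_Ioo
  beta_reduce
  rw [abs_of_pos (by linarith [hx.1] : (0:ℝ) < 2*x)]

lemma ff_integrableOn (ℓ : ℕ) :
    IntegrableOn (fun x : ℝ => x ^ ℓ / √(1 - x^2)) (Icc 0 1) volume := by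
  have h2 := smul_integrableOn ℓ
  rw [integrableOn_Icc_iff_integrableOn_Ioo] at h2 ⊢
  have h3 : IntegrableOn (fun x : ℝ => (1:ℝ)/2 * ((2*x) • gg ℓ (x^2))) (Ioo 0 1) volume :=
    h2.const_mul _
  refine h3.congr_fun (fun x hx => ?_) measurableSet_Ioo
  beta_reduce
  rw [key_eq ℓ hx]
  ring

lemma ff_intervalIntegrable (ℓ : ℕ) :
    IntervalIntegrable (fun x : ℝ => x ^ ℓ / √(1 - x^2)) volume 0 1 := by
  rw [intervalIntegrable_iff_integrableOn_Icc_of_le (by norm_num)]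
  exact ff_integrableOn ℓ

lemma ff_integral (ℓ : ℕ) :
    ∫ x in (0:ℝ)..1, x ^ ℓ / √(1 - x^2)
      = √π * Real.Gamma (((ℓ:ℝ)+1)/2) / (2 * Real.Gamma ((ℓ:ℝ)/2+1)) := by
  have hcontf : ContinuousOn (fun x : ℝ => x^2) (uIcc (0:ℝ) 1) := by fun_prop
  have hff' : ∀ x ∈ Ioo (min (0:ℝ) 1) (max (0:ℝ) 1),
      HasDerivWithinAt (fun x : ℝ => x^2) (2*x) (Ioi x) x := by
    intro x _
    simpa using (hasDerivAt_pow 2 x).hasDerivWithinAt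
  have hgcont : ContinuousOn (gg ℓ)
      ((fun x : ℝ => x^2) '' Ioo (min (0:ℝ) 1) (max (0:ℝ) 1)) := by
    rw [min_eq_left (by norm_num : (0:ℝ) ≤ 1), max_eq_right (by norm_num : (0:ℝ) ≤ 1),
      sq_image_Ioo]
    intro u hu
    have hu1 : ContinuousAt (fun u : ℝ => u ^ (((ℓ:ℝ)+1)/2 - 1)) u :=
      Real.continuousAt_rpow_const u _ (Or.inl hu.1.ne')
    have hu2 : ContinuousAt (fun u : ℝ => (1-u) ^ (-(1/2) : ℝ)) u := by
      have := Real.continuousAt_rpow_const (1-u) (-(1/2) : ℝ)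
        (Or.inl (sub_ne_zero_of_ne hu.2.ne'))
      exact this.comp ((continuous_const.sub continuous_id).continuousAt)
    exact (hu1.mul hu2).continuousWithinAt
  have hg1 : IntegrableOn (gg ℓ) ((fun x : ℝ => x^2) '' (uIcc (0:ℝ) 1)) volume := by
    have hgI : IntegrableOn (gg ℓ) (Icc 0 1) volume := by
      have := gg_intervalIntegrable ℓ
      rwa [intervalIntegrable_iff_integrableOn_Icc_of_le (by norm_num)] at this
    refine hgI.mono_set ?_
    rintro y ⟨x, hx, rfl⟩
    rw [uIcc_of_le (by norm_num : (0:ℝ) ≤ 1)] at hx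
    simp only [mem_Icc]
    refine ⟨by positivity, by nlinarith [hx.1, hx.2]⟩
  have hg2 : IntegrableOn (fun x : ℝ => (2*x) • ((gg ℓ) ∘ (fun x : ℝ => x^2)) x)
      (uIcc (0:ℝ) 1) volume := by
    rw [uIcc_of_le (by norm_num : (0:ℝ) ≤ 1)]
    exact smul_integrableOn ℓ
  have hsub := intervalIntegral.integral_comp_smul_deriv''' hcontf hff' hgcont hg1 hg2
  have hL : ∫ x in (0:ℝ)..1, (2*x) • ((gg ℓ) ∘ (fun x : ℝ => x^2)) x
      = 2 * ∫ x in (0:ℝ)..1, x ^ ℓ / √(1 - x^2) := by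
    rw [integral_of_le (by norm_num : (0:ℝ) ≤ 1), integral_of_le (by norm_num : (0:ℝ) ≤ 1),
      integral_Ioc_eq_integral_Ioo, integral_Ioc_eq_integral_Ioo, ← MeasureTheory.integral_const_mul]
    exact setIntegral_congr_fun measurableSet_Ioo fun x hx => key_eq ℓ hx
  rw [hL] at hsub
  norm_num at hsub
  rw [gg_integral ℓ] at hsub
  rw [show √π * Real.Gamma (((ℓ:ℝ)+1)/2) / (2 * Real.Gamma ((ℓ:ℝ)/2+1))
      = (1/2) * (√π * Real.Gamma (((ℓ:ℝ)+1)/2) / Real.Gamma ((ℓ:ℝ)/2+1)) by ring, ← hsub]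
  ring

theorem stmt_17 (ℓ : ℕ) (f : ℝ → ℝ) (hf : ∀ x, f x = x ^ ℓ / Real.sqrt (1 - x ^ 2)) :
    (∫ x in (0 : ℝ)..1, f x) =
        Real.sqrt π * Real.Gamma (((ℓ : ℝ) + 1) / 2) / (2 * Real.Gamma ((ℓ : ℝ) / 2 + 1)) ∧
      Filter.Tendsto (fun j : ℕ => (1 / (j : ℝ)) * ∑ n ∈ Finset.Icc 1 (j - 1), f ((n : ℝ) / j))
        Filter.atTop (nhds (∫ x in (0 : ℝ)..1, f x)) := by
  have hfe : f = fun x : ℝ => x ^ ℓ / √(1 - x^2) := funext hf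
  subst hfe
  refine ⟨ff_integral ℓ, ?_⟩
  set F : ℝ → ℝ := fun x : ℝ => x ^ ℓ / √(1 - x^2) with hF
  have hint := ff_intervalIntegrable ℓ
  have hnn : ∀ x : ℝ, 0 ≤ x → 0 ≤ F x :=
    fun x hx => div_nonneg (pow_nonneg hx _) (Real.sqrt_nonneg _)
  have hmono : ∀ x y : ℝ, 0 ≤ x → x ≤ y → y < 1 → F x ≤ F y := by
    intro x y hx hxy hy1
    have h1 : x ^ ℓ ≤ y ^ ℓ := pow_le_pow_left₀ hx hxy ℓ
    have h2 : √(1-y^2) ≤ √(1-x^2) := Real.sqrt_le_sqrt (by nlinarith)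
    have h3 : (0:ℝ) < √(1-y^2) := Real.sqrt_pos.2 (by nlinarith)
    exact div_le_div₀ (pow_nonneg (hx.trans hxy) _) h1 h3 h2
  -- interval integrability on subintervals of [0,1]
  have hsubint : ∀ a b : ℝ, 0 ≤ a → a ≤ b → b ≤ 1 → IntervalIntegrable F volume a b := by
    intro a b ha hab hb1
    refine hint.mono_set ?_
    rw [uIcc_of_le hab, uIcc_of_le (by norm_num : (0:ℝ) ≤ 1)]
    exact Icc_subset_Icc ha hb1
  set I : ℝ := ∫ x in (0:ℝ)..1, F x with hI
  -- upper bound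
  have hupper : ∀ j : ℕ, 1 ≤ j →
      (1/(j:ℝ)) * ∑ n ∈ Finset.Icc 1 (j-1), F ((n:ℝ)/j) ≤ I := by
    intro j hj
    have hjpos : (0:ℝ) < j := by exact_mod_cast hj
    set a : ℕ → ℝ := fun i => ((i:ℝ)+1)/j with ha
    have hbounds : ∀ k : ℕ, k ≤ j → (0:ℝ) ≤ (k:ℝ)/j ∧ (k:ℝ)/j ≤ 1 := by
      intro k hk
      constructor
      · positivity
      · rw [div_le_one hjpos]; exact_mod_cast hk
    have hak : ∀ k : ℕ, k < j - 1 → IntervalIntegrable F volume (a k) (a (k+1)) := by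
      intro k hk
      have hk2 : k + 2 ≤ j := by omega
      have h1 : (0:ℝ) ≤ a k := by positivity
      have h2 : a k ≤ a (k+1) := by
        rw [ha]
        apply (div_le_div_iff_of_pos_right hjpos).mpr
        push_cast
        linarith
      have h3 : a (k+1) ≤ 1 := by
        show ((((k+1:ℕ)):ℝ)+1)/(j:ℝ) ≤ 1
        rw [div_le_one hjpos]
        push_cast
        exact_mod_cast (by exact_mod_cast hk2 : ((k:ℝ)+2) ≤ j)
      exact hsubint _ _ h1 h2 h3
    have hsum_eq : ∑ n ∈ Finset.Icc 1 (j-1), F ((n:ℝ)/j)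
        = ∑ i ∈ Finset.range (j-1), F (a i) := by
      rw [show Finset.Icc 1 (j-1) = Finset.Ico 1 ((j-1)+1) by rw [Finset.Ico_add_one_right_eq_Icc],
        Finset.sum_Ico_eq_sum_range]
      simp only [Nat.add_sub_cancel]
      refine Finset.sum_congr rfl fun i _ => ?_
      congr 1
      rw [ha]
      push_cast
      ring
    have hstep : ∀ i ∈ Finset.range (j-1),
        (1/(j:ℝ)) * F (a i) ≤ ∫ x in (a i)..(a (i+1)), F x := by
      intro i hi
      rw [Finset.mem_range] at hi
      have h2 : a i ≤ a (i+1) := by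
        rw [ha]
        apply (div_le_div_iff_of_pos_right hjpos).mpr
        push_cast
        linarith
      have hii := hak i hi
      have hconst : (∫ _ in (a i)..(a (i+1)), F (a i)) = (1/(j:ℝ)) * F (a i) := by
        rw [intervalIntegral.integral_const, smul_eq_mul]
        congr 1
        rw [ha]
        push_cast
        field_simp
        ring
      rw [← hconst]
      refine intervalIntegral.integral_mono_ae_restrict h2 intervalIntegrable_const hii ?_
      have hae : ∀ᵐ x : ℝ ∂(volume.restrict (Icc (a i) (a (i+1)))), x ≠ 1 := by
        refine ae_restrict_of_ae ?_
        rw [ae_iff]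
        have hset : {x : ℝ | ¬ x ≠ 1} = {1} := by ext x; simp
        rw [hset]
        exact measure_singleton 1
      filter_upwards [ae_restrict_mem measurableSet_Icc, hae] with x hx hx1
      have hai0 : (0:ℝ) ≤ a i := by positivity
      have hle : a (i+1) ≤ 1 := by
        show ((((i+1:ℕ)):ℝ)+1)/(j:ℝ) ≤ 1
        rw [div_le_one hjpos]
        push_cast
        have : (i:ℝ) + 2 ≤ j := by exact_mod_cast (by omega : i + 2 ≤ j)
        linarith
      have hx1' : x < 1 := lt_of_le_of_ne (hx.2.trans hle) hx1
      exact hmono (a i) x hai0 hx.1 hx1'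
    calc (1/(j:ℝ)) * ∑ n ∈ Finset.Icc 1 (j-1), F ((n:ℝ)/j)
        = ∑ i ∈ Finset.range (j-1), (1/(j:ℝ)) * F (a i) := by
          rw [hsum_eq, Finset.mul_sum]
      _ ≤ ∑ i ∈ Finset.range (j-1), ∫ x in (a i)..(a (i+1)), F x :=
          Finset.sum_le_sum hstep
      _ = ∫ x in (a 0)..(a (j-1)), F x :=
          intervalIntegral.sum_integral_adjacent_intervals hak
      _ ≤ I := by
          have ha0 : a 0 = 1/(j:ℝ) := by rw [ha]; norm_num
          have haj : a (j-1) = 1 := by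
            show ((((j-1:ℕ)):ℝ)+1)/(j:ℝ) = 1
            rw [Nat.cast_sub hj]
            push_cast
            field_simp
            ring
          rw [ha0, haj]
          have hsplit : (∫ x in (0:ℝ)..(1/(j:ℝ)), F x) + (∫ x in (1/(j:ℝ))..1, F x) = I := by
            refine intervalIntegral.integral_add_adjacent_intervals ?_ ?_
            · exact hsubint 0 (1/(j:ℝ)) le_rfl (by positivity)
                ((div_le_one hjpos).2 (by exact_mod_cast hj))
            · exact hsubint (1/(j:ℝ)) 1 (by positivity)
                ((div_le_one hjpos).2 (by exact_mod_cast hj)) le_rfl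
          have hpos : 0 ≤ ∫ x in (0:ℝ)..(1/(j:ℝ)), F x := by
            refine intervalIntegral.integral_nonneg (by positivity) fun u hu => hnn u hu.1
          linarith
  -- lower bound
  have hlower : ∀ j : ℕ, 1 ≤ j →
      (∫ x in (0:ℝ)..(((j-1:ℕ):ℝ)/j), F x)
        ≤ (1/(j:ℝ)) * ∑ n ∈ Finset.Icc 1 (j-1), F ((n:ℝ)/j) := by
    intro j hj
    have hjpos : (0:ℝ) < j := by exact_mod_cast hj
    set b : ℕ → ℝ := fun i => (i:ℝ)/j with hb
    have hbk : ∀ k : ℕ, k < j - 1 → IntervalIntegrable F volume (b k) (b (k+1)) := by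
      intro k hk
      have h2 : b k ≤ b (k+1) := by
        rw [hb]
        apply (div_le_div_iff_of_pos_right hjpos).mpr
        push_cast
        linarith
      refine hsubint _ _ (by positivity) h2 ?_
      show (((k+1:ℕ)):ℝ)/(j:ℝ) ≤ 1
      rw [div_le_one hjpos]
      exact_mod_cast (by omega : k + 1 ≤ j)
    have hsum_eq : ∑ n ∈ Finset.Icc 1 (j-1), F ((n:ℝ)/j)
        = ∑ i ∈ Finset.range (j-1), F (b (i+1)) := by
      rw [show Finset.Icc 1 (j-1) = Finset.Ico 1 ((j-1)+1) by rw [Finset.Ico_add_one_right_eq_Icc],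
        Finset.sum_Ico_eq_sum_range]
      simp only [Nat.add_sub_cancel]
      refine Finset.sum_congr rfl fun i _ => ?_
      congr 1
      rw [hb]
      push_cast
      ring
    have hstep : ∀ i ∈ Finset.range (j-1),
        (∫ x in (b i)..(b (i+1)), F x) ≤ (1/(j:ℝ)) * F (b (i+1)) := by
      intro i hi
      rw [Finset.mem_range] at hi
      have h2 : b i ≤ b (i+1) := by
        rw [hb]
        apply (div_le_div_iff_of_pos_right hjpos).mpr
        push_cast
        linarith
      have hb1 : b (i+1) < 1 := by
        show (((i+1:ℕ)):ℝ)/(j:ℝ) < 1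
        rw [div_lt_one hjpos]
        exact_mod_cast (by omega : i + 1 < j)
      have hconst : (∫ _ in (b i)..(b (i+1)), F (b (i+1))) = (1/(j:ℝ)) * F (b (i+1)) := by
        rw [intervalIntegral.integral_const, smul_eq_mul]
        congr 1
        rw [hb]
        push_cast
        field_simp
        ring
      rw [← hconst]
      refine intervalIntegral.integral_mono_on h2 (hbk i hi) intervalIntegrable_const ?_
      intro x hx
      exact hmono x (b (i+1)) (le_trans (by positivity) hx.1) hx.2 hb1
    have hb0 : b 0 = 0 := by rw [hb]; norm_num
    have hbj : b (j-1) = ((j-1:ℕ):ℝ)/j := rfl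
    calc (∫ x in (0:ℝ)..(((j-1:ℕ):ℝ)/j), F x)
        = ∑ i ∈ Finset.range (j-1), ∫ x in (b i)..(b (i+1)), F x := by
          rw [intervalIntegral.sum_integral_adjacent_intervals hbk, hb0, hbj]
      _ ≤ ∑ i ∈ Finset.range (j-1), (1/(j:ℝ)) * F (b (i+1)) := Finset.sum_le_sum hstep
      _ = (1/(j:ℝ)) * ∑ n ∈ Finset.Icc 1 (j-1), F ((n:ℝ)/j) := by
          rw [hsum_eq, Finset.mul_sum]
  -- the lower bound tends to I
  have hc : Tendsto (fun j : ℕ => ((j-1:ℕ):ℝ)/j) atTop (nhds 1) := by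
    have h1 : Tendsto (fun j : ℕ => 1 - 1/(j:ℝ)) atTop (nhds 1) := by
      have := tendsto_const_nhds (X := ℝ) (x := (1:ℝ)) (f := atTop (α := ℕ))
      have h2 := this.sub tendsto_one_div_atTop_nhds_zero_nat
      simpa using h2
    refine h1.congr' ?_
    filter_upwards [eventually_ge_atTop 1] with j hj
    have hjpos : (0:ℝ) < j := by exact_mod_cast hj
    rw [Nat.cast_sub hj]
    field_simp
    norm_num
  have hcin : ∀ᶠ j : ℕ in atTop, ((j-1:ℕ):ℝ)/j ∈ Icc (0:ℝ) 1 := by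
    filter_upwards [eventually_ge_atTop 1] with j hj
    have hjpos : (0:ℝ) < j := by exact_mod_cast hj
    constructor
    · positivity
    · rw [div_le_one hjpos]
      exact_mod_cast Nat.sub_le j 1
  have hcw : Tendsto (fun j : ℕ => ((j-1:ℕ):ℝ)/j) atTop (nhdsWithin 1 (Icc (0:ℝ) 1)) :=
    tendsto_nhdsWithin_of_tendsto_nhds_of_eventually_within _ hc hcin
  have hcontF : ContinuousOn (fun x : ℝ => ∫ t in (0:ℝ)..x, F t) (uIcc (0:ℝ) 1) :=
    continuousOn_primitive_interval' hint (by
      rw [uIcc_of_le (by norm_num : (0:ℝ) ≤ 1)]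
      exact ⟨le_rfl, by norm_num⟩)
  have hCW : ContinuousWithinAt (fun x : ℝ => ∫ t in (0:ℝ)..x, F t) (Icc (0:ℝ) 1) 1 := by
    have h1 : (1:ℝ) ∈ (uIcc (0:ℝ) 1) := by
      rw [uIcc_of_le (by norm_num : (0:ℝ) ≤ 1)]; exact ⟨by norm_num, le_rfl⟩
    have := hcontF 1 h1
    rwa [uIcc_of_le (by norm_num : (0:ℝ) ≤ 1)] at this
  have hLtend : Tendsto (fun j : ℕ => ∫ x in (0:ℝ)..(((j-1:ℕ):ℝ)/j), F x) atTop (nhds I) :=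
    hCW.tendsto.comp hcw
  -- squeeze
  refine tendsto_of_tendsto_of_tendsto_of_le_of_le' hLtend tendsto_const_nhds ?_ ?_
  · filter_upwards [eventually_ge_atTop 1] with j hj
    exact hlower j hj
  · filter_upwards [eventually_ge_atTop 1] with j hj
    exact hupper j hj
end

section
/- The minimum of ∑_{n=0}^∞ b_n · n(n-1+d)/d over all sequences (b_n)_{n≥0} of nonnegative reals satisfying ∑_{n=0}^∞ b_n = 1 and ∑_{n=0}^∞ (-1)^n b_n = 0 equals 1/2, attained at b_0 = b_1 = 1/2 and b_n = 0 for n ≥ 2 (for any fixed integer d ≥ 1). -/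
open Real

theorem stmt_19 (d : ℕ) (hd : 1 ≤ d) :
    IsLeast
      {S : ℝ | ∃ b : ℕ → ℝ, (∀ n, 0 ≤ b n) ∧ HasSum b 1 ∧
        HasSum (fun n : ℕ => (-1 : ℝ) ^ n * b n) 0 ∧
        HasSum (fun n : ℕ => b n * ((n : ℝ) * ((n : ℝ) - 1 + d) / d)) S}
      (1 / 2) ∧
    HasSum (fun n : ℕ => (if n ≤ 1 then (1 : ℝ) / 2 else 0) * ((n : ℝ) * ((n : ℝ) - 1 + d) / d))
      (1 / 2) := by
  have hdpos : (0 : ℝ) < d := by exact_mod_cast hd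
  have hd1 : (1 : ℝ) ≤ d := by exact_mod_cast hd
  -- the witness sums
  have hwsum : HasSum (fun n : ℕ => (if n ≤ 1 then (1 : ℝ) / 2 else 0) *
      ((n : ℝ) * ((n : ℝ) - 1 + d) / d)) (1 / 2) := by
    have hz : ∀ n ∉ ({0, 1} : Finset ℕ), (if n ≤ 1 then (1 : ℝ) / 2 else 0) *
        ((n : ℝ) * ((n : ℝ) - 1 + d) / d) = 0 := by
      intro n hn
      simp only [Finset.mem_insert, Finset.mem_singleton] at hn
      have : ¬ n ≤ 1 := by omega
      simp [this]
    have h : HasSum _ _ := hasSum_sum_of_ne_finset_zero hz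
    have hs : ∑ n ∈ ({0, 1} : Finset ℕ), (if n ≤ 1 then (1 : ℝ) / 2 else 0) *
        ((n : ℝ) * ((n : ℝ) - 1 + d) / d) = 1 / 2 := by
      norm_num
      omega
    rwa [hs] at h
  refine ⟨⟨⟨fun n => if n ≤ 1 then (1 : ℝ) / 2 else 0, ?_, ?_, ?_, hwsum⟩, ?_⟩, hwsum⟩
  · intro n; positivity
  · have hz : ∀ n ∉ ({0, 1} : Finset ℕ), (if n ≤ 1 then (1 : ℝ) / 2 else 0) = 0 := by
      intro n hn
      simp only [Finset.mem_insert, Finset.mem_singleton] at hn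
      have : ¬ n ≤ 1 := by omega
      simp [this]
    have h : HasSum _ _ := hasSum_sum_of_ne_finset_zero hz
    have hs : ∑ n ∈ ({0, 1} : Finset ℕ), (if n ≤ 1 then (1 : ℝ) / 2 else 0) = 1 := by
      norm_num
    rwa [hs] at h
  · have hz : ∀ n ∉ ({0, 1} : Finset ℕ),
        (-1 : ℝ) ^ n * (if n ≤ 1 then (1 : ℝ) / 2 else 0) = 0 := by
      intro n hn
      simp only [Finset.mem_insert, Finset.mem_singleton] at hn
      have : ¬ n ≤ 1 := by omega
      simp [this]
    have h : HasSum _ _ := hasSum_sum_of_ne_finset_zero hz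
    have hs : ∑ n ∈ ({0, 1} : Finset ℕ),
        (-1 : ℝ) ^ n * (if n ≤ 1 then (1 : ℝ) / 2 else 0) = 0 := by
      norm_num
    rwa [hs] at h
  · -- lower bound
    rintro S ⟨b, hb0, hb1, hb2, hbS⟩
    have hg : HasSum (fun n : ℕ => (b n - (-1 : ℝ) ^ n * b n) / 2) (1 / 2) := by
      have := (hb1.sub hb2).div_const 2
      simpa using this
    have hle : ∀ n : ℕ, (b n - (-1 : ℝ) ^ n * b n) / 2 ≤
        b n * ((n : ℝ) * ((n : ℝ) - 1 + d) / d) := by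
      intro n
      rcases Nat.even_or_odd n with he | ho
      · rw [he.neg_one_pow]
        have hn0 : (0 : ℝ) ≤ (n : ℝ) := Nat.cast_nonneg n
        have : (0 : ℝ) ≤ (n : ℝ) * ((n : ℝ) - 1 + d) / d := by
          apply div_nonneg _ hdpos.le
          apply mul_nonneg hn0
          linarith
        nlinarith [hb0 n]
      · rw [ho.neg_one_pow]
        have hn1 : (1 : ℝ) ≤ (n : ℝ) := by
          exact_mod_cast Nat.one_le_iff_ne_zero.mpr (by rintro rfl; exact (Nat.not_odd_zero ho))
        have hc1 : (1 : ℝ) ≤ (n : ℝ) * ((n : ℝ) - 1 + d) / d := by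
          rw [le_div_iff₀ hdpos]
          nlinarith
        have := le_mul_of_one_le_right (hb0 n) hc1
        linarith
    exact hasSum_le hle hg hbS
end
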